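/- Let Z, G be compact abelian groups, β ∈ Z and α ∈ G topological generators, π: Z → G a continuous surjection with π(z + β) = π(z) + α. If some fibre of π is finite with cardinality r, then ker(f) is finite of order r and Z/ker(f) is topologically isomorphic to G, where f(z) = π(z) − π(0). -/

import Mathlib

/-- Under the same hypotheses, if some fibre of `π` is finite of
cardinality `r`, then the kernel of `f z = π z - π 0` is finite of order `r`
and `Z / ker f` is topologically isomorphic to `G`. -/
theorem stmt_4 {Z G : Type} [AddCommGroup Z] [TopologicalSpace Z]
    [IsTopologicalAddGroup Z] [CompactSpace Z] [T2Space Z]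
    [AddCommGroup G] [TopologicalSpace G] [IsTopologicalAddGroup G]
    [CompactSpace G] [T2Space G]
    (β : Z) (hβ : Dense (Set.range fun n : ℤ => n • β))
    (α : G) (hα : Dense (Set.range fun n : ℤ => n • α))
    (π : Z → G) (hcont : Continuous π) (hsurj : Function.Surjective π)
    (hequi : ∀ g : Z, π (g + β) = π g + α)
    (g : G) (hfin : (π ⁻¹' {g}).Finite) (r : ℕ)
    (hr : Nat.card (π ⁻¹' {g}) = r) :
    ∃ K : AddSubgroup Z, (K : Set Z) = {z : Z | π z - π 0 = 0} ∧
      (K : Set Z).Finite ∧ Nat.card K = r ∧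
      ∃ e : (Z ⧸ K) ≃+ G, Continuous e ∧ Continuous e.symm := by
  -- π is equivariant for all integer multiples
  have hequiZ : ∀ (n : ℤ) (z : Z), π (z + n • β) = π z + n • α := by
    intro n
    induction n using Int.induction_on with
    | zero => intro z; simp
    | succ k ih =>
        intro z
        have : z + (k + 1 : ℤ) • β = (z + (k : ℤ) • β) + β := by
          rw [add_smul, one_smul, add_assoc]
        rw [this, hequi, ih, add_smul, one_smul, add_assoc]
    | pred k ih =>
        intro z
        have h1 : π ((z + (-(k:ℤ) - 1) • β) + β) = π (z + (-(k:ℤ) - 1) • β) + α :=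
          hequi _
        have h2 : (z + (-(k:ℤ) - 1) • β) + β = z + (-(k:ℤ)) • β := by
          rw [sub_smul, one_smul, add_assoc]; abel
        rw [h2, ih] at h1
        have := congrArg (fun x => x - α) h1
        simp only [add_sub_cancel_right] at this
        rw [← this, sub_smul, one_smul]
        abel_nf
  -- additivity of f
  have hadd : ∀ z w : Z, π (z + w) + π 0 = π z + π w := by
    intro z w
    have key : (fun w : Z => π (z + w) + π 0) = fun w : Z => π z + π w := by
      apply Continuous.ext_on hβ
      · exact (hcont.comp (continuous_const.add continuous_id)).add continuous_const
      · exact continuous_const.add hcont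
      · rintro _ ⟨n, rfl⟩
        have h1 : π (z + n • β) = π z + n • α := hequiZ n z
        have h2 : π (n • β) = π 0 + n • α := by
          simpa using hequiZ n 0
        simp only [h1, h2]
        abel
    exact congrFun key w
  -- the homomorphism F z = π z - π 0
  set F : Z →+ G := AddMonoidHom.mk' (fun z => π z - π 0) (by
    intro a b
    have h : π (a + b) = π a + π b - π 0 := eq_sub_of_add_eq (hadd a b)
    rw [h]; abel) with hF
  have hFapp : ∀ z, F z = π z - π 0 := fun z => rfl
  have hFcont : Continuous F := hcont.sub continuous_const
  have hFsurj : Function.Surjective F := by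
    intro y
    obtain ⟨z, hz⟩ := hsurj (y + π 0)
    exact ⟨z, by rw [hFapp, hz]; abel⟩
  refine ⟨F.ker, ?_, ?_, ?_, ?_⟩
  · ext z; simp [AddMonoidHom.mem_ker, hFapp]
  all_goals
    obtain ⟨z₀, hz₀⟩ := hsurj g
  -- characterize the kernel as a shifted fibre
  · have hKset : (F.ker : Set Z) = (fun k => z₀ + k) ⁻¹' (π ⁻¹' {g}) := by
      ext k
      simp only [SetLike.mem_coe, AddMonoidHom.mem_ker, Set.mem_preimage,
        Set.mem_singleton_iff]
      constructor
      · intro hk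
        have h := hadd z₀ k
        have hπk : π k = π 0 := by
          have h2 := hFapp k; rw [hk] at h2
          exact sub_eq_zero.mp h2.symm
        rw [hπk] at h
        have : π (z₀ + k) = π z₀ := add_right_cancel h
        rw [this, hz₀]
      · intro hk
        have h := hadd z₀ k
        rw [hk, hz₀] at h
        have : π 0 = π k := add_left_cancel h
        rw [hFapp, ← this, sub_self]
    rw [hKset]
    exact hfin.preimage (fun a _ b _ h => by exact add_left_cancel h)
  · -- cardinality
    have hbij : Function.Bijective (fun k : F.ker => (⟨z₀ + (k : Z), by
        have hk := k.2
        rw [AddMonoidHom.mem_ker, hFapp] at hk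
        have hπk : π (k : Z) = π 0 := sub_eq_zero.mp hk
        have h := hadd z₀ (k : Z)
        rw [hπk] at h
        have h3 : π (z₀ + (k : Z)) = π z₀ := add_right_cancel h
        exact Set.mem_preimage.mpr (by rw [Set.mem_singleton_iff, h3, hz₀])⟩ :
        (π ⁻¹' {g}))) := by
      constructor
      · intro a b hab
        have h := congrArg Subtype.val hab
        exact Subtype.ext (add_left_cancel h)
      · rintro ⟨w, hw⟩
        simp only [Set.mem_preimage, Set.mem_singleton_iff] at hw
        have hmem : w - z₀ ∈ F.ker := by
          rw [AddMonoidHom.mem_ker]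
          have h := hadd z₀ (w - z₀)
          have h2 : z₀ + (w - z₀) = w := by abel
          rw [h2, hw, hz₀] at h
          have : π 0 = π (w - z₀) := add_left_cancel h
          rw [hFapp, ← this, sub_self]
        exact ⟨⟨w - z₀, hmem⟩, Subtype.ext (by show z₀ + (w - z₀) = w; abel)⟩
    rw [← hr]
    exact Nat.card_eq_of_bijective _ hbij
  · -- topological isomorphism
    haveI : CompactSpace (Z ⧸ F.ker) := Quotient.compactSpace
    set e : (Z ⧸ F.ker) ≃+ G := QuotientAddGroup.quotientKerEquivOfSurjective F hFsurj
      with he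
    have hecont : Continuous e := by
      refine (QuotientAddGroup.isQuotientMap_mk F.ker).continuous_iff.mpr ?_
      have hco : ((e : Z ⧸ F.ker → G) ∘ QuotientAddGroup.mk) = ⇑F := by
        funext x; rfl
      rw [hco]; exact hFcont
    exact ⟨e, hecont, (hecont.homeoOfEquivCompactToT2 (f := e.toEquiv)).symm.continuous⟩
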